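/- CDF of the two-piece distribution: let f be a probability density on ℝ symmetric about 0 (f(−z) = f(z) for all z and ∫_ℝ f(z) dz = 1) with cumulative distribution function F(t) = ∫_{−∞}^t f(s) ds, and let g(· | μ, σ, a, b; f) be the two-piece density with location μ ∈ ℝ, scale σ > 0 and a, b > 0. Then the cumulative distribution function G(z) = ∫_{−∞}^z g(s | μ, σ, a, b; f) ds satisfies: G(z) = (2b/(a+b)) · F((z−μ)/(σb)) for z < μ, and G(z) = (b−a)/(a+b) + (2a/(a+b)) · F((z−μ)/(σa)) for z ≥ μ. -/

import Mathlib

open MeasureTheory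

lemma sub_div_Iic' (f : ℝ → ℝ) {c : ℝ} (hc : 0 < c) (μ z : ℝ) :
    ∫ s in Set.Iic z, f ((s - μ) / c) = c * ∫ s in Set.Iic ((z - μ) / c), f s := by
  have hT : MeasurableEmbedding (fun x : ℝ => c * x + μ) :=
    ((Homeomorph.mulLeft₀ c hc.ne').trans (Homeomorph.addRight μ)).measurableEmbedding
  have hmap : Measure.map (fun x : ℝ => c * x + μ) volume
      = ENNReal.ofReal c⁻¹ • volume := by
    have h1 : (fun x : ℝ => c * x + μ) = (fun x : ℝ => x + μ) ∘ (fun x : ℝ => c * x) := rfl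
    rw [h1, ← Measure.map_map (measurable_add_const μ) (measurable_const_mul c),
      Real.map_volume_mul_left (a := c) hc.ne', Measure.map_smul, map_add_right_eq_self,
      abs_of_pos (inv_pos.mpr hc)]
  have key := hT.setIntegral_map (μ := volume) (fun y => f ((y - μ) / c)) (Set.Iic z)
  rw [hmap] at key
  have hpre : (fun x : ℝ => c * x + μ) ⁻¹' Set.Iic z = Set.Iic ((z - μ) / c) := by
    ext x
    simp only [Set.mem_preimage, Set.mem_Iic]
    rw [le_div_iff₀ hc]
    constructor <;> intro h <;> linarith [mul_comm c x]
  rw [hpre] at key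
  simp only [Measure.restrict_smul, integral_smul_measure,
    ENNReal.toReal_ofReal (inv_nonneg.mpr hc.le)] at key
  have hsimp : ∀ x : ℝ, f ((c * x + μ - μ) / c) = f x := fun x => by
    congr 1; field_simp; ring
  simp only [hsimp] at key
  rw [smul_eq_mul] at key
  field_simp at key
  linarith [key]

/-- Two-piece density with location `μ`, scale `σ`, baseline density `f`,
and parameterisation values `a`, `b`. -/
noncomputable def twoPiece (f : ℝ → ℝ) (μ σ a b : ℝ) (z : ℝ) : ℝ :=
  if z < μ then 2 / (σ * (a + b)) * f ((z - μ) / (σ * b))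
  else 2 / (σ * (a + b)) * f ((z - μ) / (σ * a))

/-- The CDF of the two-piece distribution: below the mode it equals
`(2b/(a+b)) F((z-μ)/(σb))`, and above the mode it equals
`(b-a)/(a+b) + (2a/(a+b)) F((z-μ)/(σa))`, where `F` is the CDF of the baseline `f`. -/
theorem twoPiece_cdf
    (f : ℝ → ℝ) (hf_nonneg : ∀ z, 0 ≤ f z) (hf_symm : ∀ z, f (-z) = f z)
    (hf_int : Integrable f) (hf_dens : ∫ z, f z = 1)
    (μ σ a b : ℝ) (hσ : 0 < σ) (ha : 0 < a) (hb : 0 < b) :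
    (∀ z < μ, ∫ s in Set.Iic z, twoPiece f μ σ a b s =
        2 * b / (a + b) * ∫ s in Set.Iic ((z - μ) / (σ * b)), f s) ∧
    (∀ z ≥ μ, ∫ s in Set.Iic z, twoPiece f μ σ a b s =
        (b - a) / (a + b) + 2 * a / (a + b) * ∫ s in Set.Iic ((z - μ) / (σ * a)), f s) := by
  have hab : a + b ≠ 0 := by positivity
  have hσb : (0:ℝ) < σ * b := by positivity
  have hσa : (0:ℝ) < σ * a := by positivity
  -- F(0) = 1/2
  have hF0 : ∫ s in Set.Iic (0:ℝ), f s = 1 / 2 := by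
    have hsplit : ∫ z, f z =
        (∫ s in Set.Iic (0:ℝ), f s) + ∫ s in Set.Ioi (0:ℝ), f s :=
      (intervalIntegral.integral_Iic_add_Ioi hf_int.integrableOn hf_int.integrableOn).symm
    have hneg : ∫ s in Set.Ioi (0:ℝ), f s = ∫ s in Set.Iic (0:ℝ), f s := by
      rw [show (Set.Iic (0:ℝ)) = Set.Iic (-(0:ℝ)) by norm_num,
        ← integral_comp_neg_Ioi]
      exact setIntegral_congr_fun measurableSet_Ioi fun x _ => (hf_symm x).symm
    rw [hf_dens, hneg] at hsplit
    linarith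
  -- integrability of the composed functions
  have hint_b : Integrable (fun s : ℝ => f ((s - μ) / (σ * b))) :=
    (hf_int.comp_div hσb.ne').comp_sub_right μ
  have hint_a : Integrable (fun s : ℝ => f ((s - μ) / (σ * a))) :=
    (hf_int.comp_div hσa.ne').comp_sub_right μ
  -- integrability of twoPiece
  have hint_tp : Integrable (twoPiece f μ σ a b) := by
    have : twoPiece f μ σ a b = (Set.Iio μ).piecewise
        (fun s => 2 / (σ * (a + b)) * f ((s - μ) / (σ * b)))
        (fun s => 2 / (σ * (a + b)) * f ((s - μ) / (σ * a))) := by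
      funext s
      simp [twoPiece, Set.piecewise, Set.mem_Iio]
    rw [this]
    classical
    exact Integrable.piecewise measurableSet_Iio
      (hint_b.const_mul _).integrableOn (hint_a.const_mul _).integrableOn
  have hae_ne : ∀ᵐ s : ℝ, s ≠ μ := by
    have : volume ({μ} : Set ℝ) = 0 := measure_singleton μ
    rw [ae_iff]
    simp only [not_not, Set.setOf_eq_eq_singleton]; exact this
  -- integral over Iic μ of twoPiece
  have hIicμ : ∫ s in Set.Iic μ, twoPiece f μ σ a b s = b / (a + b) := by
    have hcong : ∫ s in Set.Iic μ, twoPiece f μ σ a b s =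
        ∫ s in Set.Iic μ, 2 / (σ * (a + b)) * f ((s - μ) / (σ * b)) := by
      refine setIntegral_congr_ae measurableSet_Iic ?_
      filter_upwards [hae_ne] with s hs hsle
      have : s < μ := lt_of_le_of_ne hsle hs
      simp [twoPiece, this]
    rw [hcong, integral_const_mul, sub_div_Iic' f hσb μ μ]
    have h0 : (μ - μ) / (σ * b) = 0 := by simp
    rw [h0, hF0]
    field_simp
  constructor
  · intro z hz
    have hcong : ∫ s in Set.Iic z, twoPiece f μ σ a b s =
        ∫ s in Set.Iic z, 2 / (σ * (a + b)) * f ((s - μ) / (σ * b)) := by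
      refine setIntegral_congr_fun measurableSet_Iic fun s hs => ?_
      have : s < μ := lt_of_le_of_lt hs hz
      simp [twoPiece, this]
    rw [hcong, integral_const_mul, sub_div_Iic' f hσb μ z]
    field_simp
  · intro z hz
    have hsplit : ∫ s in Set.Iic z, twoPiece f μ σ a b s =
        (∫ s in Set.Iic μ, twoPiece f μ σ a b s) +
        ∫ s in Set.Ioc μ z, twoPiece f μ σ a b s := by
      rw [← setIntegral_union (Set.Iic_disjoint_Ioc le_rfl) measurableSet_Ioc
        hint_tp.integrableOn hint_tp.integrableOn, Set.Iic_union_Ioc_eq_Iic hz]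
    have hsplit_a : ∫ s in Set.Iic z, f ((s - μ) / (σ * a)) =
        (∫ s in Set.Iic μ, f ((s - μ) / (σ * a))) +
        ∫ s in Set.Ioc μ z, f ((s - μ) / (σ * a)) := by
      rw [← setIntegral_union (Set.Iic_disjoint_Ioc le_rfl) measurableSet_Ioc
        hint_a.integrableOn hint_a.integrableOn, Set.Iic_union_Ioc_eq_Iic hz]
    have hcongIoc : ∫ s in Set.Ioc μ z, twoPiece f μ σ a b s =
        2 / (σ * (a + b)) * ∫ s in Set.Ioc μ z, f ((s - μ) / (σ * a)) := by
      rw [← integral_const_mul]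
      refine setIntegral_congr_fun measurableSet_Ioc fun s hs => ?_
      have : ¬ s < μ := not_lt.mpr hs.1.le
      simp [twoPiece, this]
    have hIicμa : ∫ s in Set.Iic μ, f ((s - μ) / (σ * a)) = σ * a * (1 / 2) := by
      rw [sub_div_Iic' f hσa μ μ]
      have h0 : (μ - μ) / (σ * a) = 0 := by simp
      rw [h0, hF0]
    rw [hsplit, hIicμ, hcongIoc]
    have hIocval : ∫ s in Set.Ioc μ z, f ((s - μ) / (σ * a)) =
        σ * a * (∫ s in Set.Iic ((z - μ) / (σ * a)), f s) - σ * a * (1 / 2) := by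
      have := sub_div_Iic' f hσa μ z
      linarith [hsplit_a, hIicμa, this]
    rw [hIocval]
    field_simp
    ring
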